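/- Let (Λ, Ω₀) be a generalized cocycle on (K, A), and let c and c' each assign to every composable pair (ξ,η) of arrows of K a natural transformation 𝟭_A ⟹ 𝟭_A. Then the following are equivalent: (i) there exists a family ρ assigning to each arrow ξ of K a natural transformation ρ(ξ) : Λ_ξ ⟹ Λ_ξ, with ρ(1_x) the identity transformation for every object x of K, such that for all composable ξ, η and all objects a of A: c'(ξ,η)(a)·Ω₀(ξ,η,a) = c(ξ,η)(a)·Ω₀(ξ,η,a)·Λ_{ξη}⁻¹(Λ_η(ρ(ξ)(a))·ρ(η)(Λ_ξ(a)))·Λ_{ξη}⁻¹(ρ(ξη)(Λ_{ξη}⁻¹(Λ_η(Λ_ξ(a)))))⁻¹; (ii) there exists a family σ assigning to each arrow ξ of K a natural transformation σ(ξ) : 𝟭_A ⟹ 𝟭_A, with σ(1_x) the identity for every object x, such that for all composable ξ, η and all objects a: c(ξ,η)(a) = c'(ξ,η)(a)·Λ_ξ⁻¹(σ(η)(Λ_ξ(a)))·σ(ξη)(a)⁻¹·σ(ξ)(a). -/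

import Mathlib

open CategoryTheory
universe v u v' u'
variable {K : Type u} [Groupoid K] {A : Type u'} [Groupoid A]
structure PreAction (K : Type u) (A : Type u') [Groupoid K] [Groupoid A] where
  map : ∀ {x y : K}, (x ⟶ y) → (A ⥤ A)
  inv : ∀ {x y : K}, (x ⟶ y) → (A ⥤ A)
  comp_inv : ∀ {x y : K} (ξ : x ⟶ y), map ξ ⋙ inv ξ = 𝟭 A
  inv_comp : ∀ {x y : K} (ξ : x ⟶ y), inv ξ ⋙ map ξ = 𝟭 A
  map_id : ∀ x : K, map (𝟙 x) = 𝟭 A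
namespace PreAction
variable (P : PreAction K A)
theorem inv_id (x : K) : P.inv (𝟙 x) = 𝟭 A := by
  have h := P.inv_comp (𝟙 x); rw [P.map_id, Functor.comp_id] at h; exact h
@[simp] theorem inv_map_obj {x y : K} (ξ : x ⟶ y) (a : A) :
    (P.inv ξ).obj ((P.map ξ).obj a) = a := Functor.congr_obj (P.comp_inv ξ) a
@[simp] theorem map_inv_obj {x y : K} (ξ : x ⟶ y) (a : A) :
    (P.map ξ).obj ((P.inv ξ).obj a) = a := Functor.congr_obj (P.inv_comp ξ) a
@[simp] theorem map_id_obj (x : K) (a : A) : (P.map (𝟙 x)).obj a = a :=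
  Functor.congr_obj (P.map_id x) a
@[simp] theorem inv_id_obj (x : K) (a : A) : (P.inv (𝟙 x)).obj a = a :=
  Functor.congr_obj (P.inv_id x) a
theorem cof_obj_id_left {x y : K} (η : x ⟶ y) (a : A) :
    a = (P.inv (𝟙 x ≫ η)).obj ((P.map η).obj ((P.map (𝟙 x)).obj a)) := by
  rw [Category.id_comp]; simp
theorem cof_obj_id_right {x y : K} (ξ : x ⟶ y) (a : A) :
    a = (P.inv (ξ ≫ 𝟙 y)).obj ((P.map (𝟙 y)).obj ((P.map ξ).obj a)) := by
  rw [Category.comp_id]; simp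
end PreAction
structure Cofactor (P : PreAction K A) where
  Ω : ∀ {x y z : K} (ξ : x ⟶ y) (η : y ⟶ z) (a : A),
      a ⟶ (P.inv (ξ ≫ η)).obj ((P.map η).obj ((P.map ξ).obj a))
  naturality : ∀ {x y z : K} (ξ : x ⟶ y) (η : y ⟶ z) {a b : A} (h : a ⟶ b),
      h ≫ Ω ξ η b = Ω ξ η a ≫ (P.inv (ξ ≫ η)).map ((P.map η).map ((P.map ξ).map h))
  id_left : ∀ {x y : K} (η : x ⟶ y) (a : A),
      Ω (𝟙 x) η a = eqToHom (P.cof_obj_id_left η a)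
  id_right : ∀ {x y : K} (ξ : x ⟶ y) (a : A),
      Ω ξ (𝟙 y) a = eqToHom (P.cof_obj_id_right ξ a)
def IsGenCocycle {P : PreAction K A} (C : Cofactor P) : Prop :=
  ∀ {x y z w : K} (ξ : x ⟶ y) (η : y ⟶ z) (ζ : z ⟶ w) (a : A),
    C.Ω ξ η a ≫
      C.Ω (ξ ≫ η) ζ ((P.inv (ξ ≫ η)).obj ((P.map η).obj ((P.map ξ).obj a))) ≫
      eqToHom (by simp) =
    eqToHom (by simp) ≫
      (P.inv ξ).map (C.Ω η ζ ((P.map ξ).obj a)) ≫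
      C.Ω ξ (η ≫ ζ)
        ((P.inv ξ).obj ((P.inv (η ≫ ζ)).obj ((P.map ζ).obj ((P.map η).obj ((P.map ξ).obj a)))))

variable {P : PreAction K A} (C : Cofactor P)



section Statement16Aux

theorem PreAction.inv_map_map (P : PreAction K A) {x y : K} (ξ : x ⟶ y) {a b : A}
    (f : a ⟶ b) :
    (P.inv ξ).map ((P.map ξ).map f) =
      eqToHom (by simp) ≫ f ≫ eqToHom (by simp) := by
  simpa using Functor.congr_hom (P.comp_inv ξ) f

theorem PreAction.map_inv_map (P : PreAction K A) {x y : K} (ξ : x ⟶ y) {a b : A}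
    (f : a ⟶ b) :
    (P.map ξ).map ((P.inv ξ).map f) =
      eqToHom (by simp) ≫ f ≫ eqToHom (by simp) := by
  simpa using Functor.congr_hom (P.inv_comp ξ) f

theorem app_comm (e : 𝟭 A ⟶ 𝟭 A) {a b : A} (h : a ⟶ b) :
    e.app a ≫ h = h ≫ e.app b := by
  simpa using (e.naturality h).symm

theorem inv_app_comm (e : 𝟭 A ⟶ 𝟭 A) {a b : A} (h : a ⟶ b) :
    Groupoid.inv (e.app a) ≫ h = h ≫ Groupoid.inv (e.app b) := by
  rw [Groupoid.inv_eq_inv, Groupoid.inv_eq_inv, IsIso.inv_comp_eq, ← Category.assoc,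
    app_comm e h, Category.assoc, IsIso.hom_inv_id, Category.comp_id]

theorem ginv_ginv {a b : A} (f : a ⟶ b) : Groupoid.inv (Groupoid.inv f) = f := by
  simp [Groupoid.inv_eq_inv]

theorem map_ginv (F : A ⥤ A) {a b : A} (g : a ⟶ b) :
    F.map (Groupoid.inv g) = Groupoid.inv (F.map g) := by
  simp [Groupoid.inv_eq_inv]

/-- inverse of a natural endotransformation of the identity functor -/
def invTrans (e : 𝟭 A ⟶ 𝟭 A) : 𝟭 A ⟶ 𝟭 A where
  app a := Groupoid.inv (e.app a)
  naturality a b h := by simpa using (inv_app_comm e h).symm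

@[simp] theorem invTrans_app (e : 𝟭 A ⟶ 𝟭 A) (a : A) :
    (invTrans e).app a = Groupoid.inv (e.app a) := rfl

/-- from a family `ρ(ξ) : Λ_ξ ⟹ Λ_ξ` produce `σ(ξ) : 𝟭 ⟹ 𝟭` -/
def sigmaOf {P : PreAction K A} (ρ : ∀ {x y : K} (ξ : x ⟶ y), (P.map ξ ⟶ P.map ξ))
    {x y : K} (ξ : x ⟶ y) : 𝟭 A ⟶ 𝟭 A :=
  eqToHom (P.comp_inv ξ).symm ≫ Functor.whiskerRight (ρ ξ) (P.inv ξ) ≫ eqToHom (P.comp_inv ξ)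

theorem sigmaOf_app {P : PreAction K A} (ρ : ∀ {x y : K} (ξ : x ⟶ y), (P.map ξ ⟶ P.map ξ))
    {x y : K} (ξ : x ⟶ y) (a : A) :
    (sigmaOf ρ ξ).app a =
      eqToHom (by simp) ≫ (P.inv ξ).map ((ρ ξ).app a) ≫ eqToHom (by simp) := by
  simp [sigmaOf, eqToHom_app]

/-- from `e : 𝟭 ⟹ 𝟭` produce `ρ(ξ) : Λ_ξ ⟹ Λ_ξ` -/
def rhoOf {P : PreAction K A} {x y : K} (ξ : x ⟶ y) (e : 𝟭 A ⟶ 𝟭 A) :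
    P.map ξ ⟶ P.map ξ where
  app a := (P.map ξ).map (e.app a)
  naturality a b h := by
    rw [← Functor.map_comp, ← Functor.map_comp]
    exact congrArg (P.map ξ).map (app_comm e h).symm

@[simp] theorem rhoOf_app {P : PreAction K A} {x y : K} (ξ : x ⟶ y) (e : 𝟭 A ⟶ 𝟭 A)
    (a : A) : (rhoOf ξ e).app a = (P.map ξ).map (e.app a) := rfl

theorem rho_eq {P : PreAction K A} (ρ : ∀ {x y : K} (ξ : x ⟶ y), (P.map ξ ⟶ P.map ξ))
    {x y : K} (ξ : x ⟶ y) (a : A) :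
    (ρ ξ).app a = (P.map ξ).map ((sigmaOf ρ ξ).app a) := by
  rw [sigmaOf_app]
  simp [eqToHom_map, P.map_inv_map]

theorem mid_inv (P : PreAction K A) {x y : K} (ξ : x ⟶ y) (e : 𝟭 A ⟶ 𝟭 A) (a : A) :
    eqToHom (show a = (P.inv ξ).obj ((P.map ξ).obj a) by simp) ≫
      (P.inv ξ).map (Groupoid.inv (e.app ((P.map ξ).obj a))) ≫
      eqToHom (show (P.inv ξ).obj ((P.map ξ).obj a) = a by simp) =
    Groupoid.inv
      (eqToHom (show a = (P.inv ξ).obj ((P.map ξ).obj a) by simp) ≫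
        (P.inv ξ).map (e.app ((P.map ξ).obj a)) ≫
        eqToHom (show (P.inv ξ).obj ((P.map ξ).obj a) = a by simp)) := by
  simp [Groupoid.inv_eq_inv]

theorem alg1 {a : A} (cc U m : a ⟶ a) (w : 𝟭 A ⟶ 𝟭 A) :
    (cc ≫ U ≫ m ≫ Groupoid.inv (w.app a)) ≫ Groupoid.inv m ≫ w.app a ≫ Groupoid.inv U =
      cc := by
  have h : m ≫ Groupoid.inv (w.app a) ≫ Groupoid.inv m = Groupoid.inv (w.app a) := by
    rw [inv_app_comm w (Groupoid.inv m), ← Category.assoc, Groupoid.comp_inv,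
      Category.id_comp]
  calc (cc ≫ U ≫ m ≫ Groupoid.inv (w.app a)) ≫ Groupoid.inv m ≫ w.app a ≫ Groupoid.inv U
      = cc ≫ U ≫ ((m ≫ Groupoid.inv (w.app a) ≫ Groupoid.inv m) ≫ w.app a) ≫
          Groupoid.inv U := by simp only [Category.assoc]
    _ = cc ≫ U ≫ (Groupoid.inv (w.app a) ≫ w.app a) ≫ Groupoid.inv U := by rw [h]
    _ = cc := by rw [Groupoid.inv_comp, Category.id_comp, Groupoid.comp_inv,
          Category.comp_id]

theorem alg2 {a : A} (cc U m : a ⟶ a) (w : 𝟭 A ⟶ 𝟭 A) :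
    (cc ≫ m ≫ Groupoid.inv (w.app a) ≫ U) ≫ Groupoid.inv U ≫ Groupoid.inv m ≫ w.app a =
      cc := by
  have h : m ≫ Groupoid.inv (w.app a) ≫ Groupoid.inv m = Groupoid.inv (w.app a) := by
    rw [inv_app_comm w (Groupoid.inv m), ← Category.assoc, Groupoid.comp_inv,
      Category.id_comp]
  calc (cc ≫ m ≫ Groupoid.inv (w.app a) ≫ U) ≫ Groupoid.inv U ≫ Groupoid.inv m ≫ w.app a
      = cc ≫ m ≫ Groupoid.inv (w.app a) ≫ (U ≫ Groupoid.inv U) ≫ Groupoid.inv m ≫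
          w.app a := by simp only [Category.assoc]
    _ = cc ≫ ((m ≫ Groupoid.inv (w.app a) ≫ Groupoid.inv m) ≫ w.app a) := by
          rw [Groupoid.comp_inv, Category.id_comp]; simp only [Category.assoc]
    _ = cc := by rw [h, Groupoid.inv_comp, Category.comp_id]

theorem key_conj (P : PreAction K A) (C₀ : Cofactor P) {x y z : K}
    (ξ : x ⟶ y) (η : y ⟶ z) (a : A) (u v w : 𝟭 A ⟶ 𝟭 A) :
    C₀.Ω ξ η a ≫
      (P.inv (ξ ≫ η)).map
        ((P.map η).map ((P.map ξ).map (u.app a)) ≫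
          (P.map η).map (v.app ((P.map ξ).obj a))) ≫
      (eqToHom (by simp) ≫
        (P.inv (ξ ≫ η)).map (Groupoid.inv ((P.map (ξ ≫ η)).map (w.app
          ((P.inv (ξ ≫ η)).obj ((P.map η).obj ((P.map ξ).obj a)))))) ≫
        eqToHom (by simp)) =
    (u.app a ≫
      (eqToHom (show a = (P.inv ξ).obj ((P.map ξ).obj a) by simp) ≫
        (P.inv ξ).map (v.app ((P.map ξ).obj a)) ≫
        eqToHom (show (P.inv ξ).obj ((P.map ξ).obj a) = a by simp)) ≫
      Groupoid.inv (w.app a)) ≫ C₀.Ω ξ η a := by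
  have hmid : (P.map ξ).map
      (eqToHom (show a = (P.inv ξ).obj ((P.map ξ).obj a) by simp) ≫
        (P.inv ξ).map (v.app ((P.map ξ).obj a)) ≫
        eqToHom (show (P.inv ξ).obj ((P.map ξ).obj a) = a by simp)) =
      v.app ((P.map ξ).obj a) := by
    simp [eqToHom_map, P.map_inv_map]
  have h1 : (P.map η).map ((P.map ξ).map (u.app a)) ≫
      (P.map η).map (v.app ((P.map ξ).obj a)) =
      (P.map η).map ((P.map ξ).map (u.app a ≫
        (eqToHom (show a = (P.inv ξ).obj ((P.map ξ).obj a) by simp) ≫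
          (P.inv ξ).map (v.app ((P.map ξ).obj a)) ≫
          eqToHom (show (P.inv ξ).obj ((P.map ξ).obj a) = a by simp)))) := by
    rw [Functor.map_comp, hmid, Functor.map_comp]
  have h3 : (eqToHom (show (P.inv (ξ ≫ η)).obj ((P.map η).obj ((P.map ξ).obj a)) =
        (P.inv (ξ ≫ η)).obj ((P.map (ξ ≫ η)).obj
          ((P.inv (ξ ≫ η)).obj ((P.map η).obj ((P.map ξ).obj a)))) by simp) ≫
      (P.inv (ξ ≫ η)).map (Groupoid.inv ((P.map (ξ ≫ η)).map (w.app
        ((P.inv (ξ ≫ η)).obj ((P.map η).obj ((P.map ξ).obj a)))))) ≫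
      eqToHom (by simp)) =
      Groupoid.inv (w.app ((P.inv (ξ ≫ η)).obj ((P.map η).obj ((P.map ξ).obj a)))) := by
    rw [← map_ginv, P.inv_map_map]
    simp
  have h2 := (C₀.naturality ξ η (u.app a ≫
    (eqToHom (show a = (P.inv ξ).obj ((P.map ξ).obj a) by simp) ≫
      (P.inv ξ).map (v.app ((P.map ξ).obj a)) ≫
      eqToHom (show (P.inv ξ).obj ((P.map ξ).obj a) = a by simp)))).symm
  simp only [Functor.id_obj] at h2
  have h4 := (inv_app_comm w (C₀.Ω ξ η a)).symm
  rw [h1, h3, ← Category.assoc, h2]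
  simp only [Category.assoc]
  rw [h4]

end Statement16Aux

/-- Let `(Λ, Ω₀)` be a generalized cocycle and let `c, c'` assign
natural transformations `𝟭_A ⟹ 𝟭_A` to composable pairs.  Then (i) `c·Ω₀` and
`c'·Ω₀` differ by a conjugation family `ρ(ξ) : Λ_ξ ⟹ Λ_ξ` (with `ρ(1_x) = id`)
if and only if (ii) `c` and `c'` differ by the coboundary of a family
`σ(ξ) : 𝟭_A ⟹ 𝟭_A` (with `σ(1_x) = id`). -/
theorem equivalent_cocycles_iff_cohomologous (P : PreAction K A) (C₀ : Cofactor P)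
    (hC₀ : IsGenCocycle C₀)
    (c c' : ∀ {x y z : K}, (x ⟶ y) → (y ⟶ z) → (𝟭 A ⟶ 𝟭 A)) :
    (∃ ρ : ∀ {x y : K} (ξ : x ⟶ y), (P.map ξ ⟶ P.map ξ),
      (∀ x : K, ρ (𝟙 x) = 𝟙 (P.map (𝟙 x))) ∧
      (∀ {x y z : K} (ξ : x ⟶ y) (η : y ⟶ z) (a : A),
        (c' ξ η).app a ≫ C₀.Ω ξ η a =
          ((c ξ η).app a ≫ C₀.Ω ξ η a) ≫
          (P.inv (ξ ≫ η)).map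
            ((P.map η).map ((ρ ξ).app a) ≫ (ρ η).app ((P.map ξ).obj a)) ≫
          (eqToHom (by simp) ≫
            (P.inv (ξ ≫ η)).map (Groupoid.inv ((ρ (ξ ≫ η)).app
              ((P.inv (ξ ≫ η)).obj ((P.map η).obj ((P.map ξ).obj a))))) ≫
            eqToHom (by simp)))) ↔
    (∃ s : ∀ {x y : K}, (x ⟶ y) → (𝟭 A ⟶ 𝟭 A),
      (∀ x : K, s (𝟙 x) = 𝟙 (𝟭 A)) ∧
      (∀ {x y z : K} (ξ : x ⟶ y) (η : y ⟶ z) (a : A),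
        (c ξ η).app a =
          (c' ξ η).app a ≫
          (eqToHom (show a = (P.inv ξ).obj ((P.map ξ).obj a) by simp) ≫
            (P.inv ξ).map ((s η).app ((P.map ξ).obj a)) ≫
            eqToHom (show (P.inv ξ).obj ((P.map ξ).obj a) = a by simp)) ≫
          Groupoid.inv ((s (ξ ≫ η)).app a) ≫
          (s ξ).app a)) := by
  constructor
  · rintro ⟨ρ, hρ1, hρ2⟩
    refine ⟨fun {x y} ξ => invTrans (sigmaOf ρ ξ), ?_, ?_⟩
    · intro x
      ext a
      simp [invTrans, sigmaOf_app, hρ1 x, Groupoid.inv_eq_inv]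
    · intro x y z ξ η a
      have hr := hρ2 ξ η a
      rw [rho_eq ρ ξ a, rho_eq ρ η ((P.map ξ).obj a),
        rho_eq ρ (ξ ≫ η) ((P.inv (ξ ≫ η)).obj ((P.map η).obj ((P.map ξ).obj a)))] at hr
      have hkey := key_conj P C₀ ξ η a (sigmaOf ρ ξ) (sigmaOf ρ η) (sigmaOf ρ (ξ ≫ η))
      simp only [Category.assoc] at hr hkey
      rw [hkey] at hr
      have hc' : (c' ξ η).app a =
          (c ξ η).app a ≫ (sigmaOf ρ ξ).app a ≫
            (eqToHom (show a = (P.inv ξ).obj ((P.map ξ).obj a) by simp) ≫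
              (P.inv ξ).map ((sigmaOf ρ η).app ((P.map ξ).obj a)) ≫
              eqToHom (show (P.inv ξ).obj ((P.map ξ).obj a) = a by simp)) ≫
            Groupoid.inv ((sigmaOf ρ (ξ ≫ η)).app a) := by
        rw [← cancel_mono (C₀.Ω ξ η a)]
        simpa only [Category.assoc] using hr
      simp only [invTrans_app, ginv_ginv, mid_inv P ξ (sigmaOf ρ η) a]
      rw [hc']
      exact (alg1 ((c ξ η).app a) ((sigmaOf ρ ξ).app a) _ (sigmaOf ρ (ξ ≫ η))).symm
  · rintro ⟨s, hs1, hs2⟩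
    refine ⟨fun {x y} ξ => rhoOf ξ (invTrans (s ξ)), ?_, ?_⟩
    · intro x
      ext a
      simp [rhoOf, invTrans, hs1 x, Groupoid.inv_eq_inv]
    · intro x y z ξ η a
      have hkey := key_conj P C₀ ξ η a (invTrans (s ξ)) (invTrans (s η))
        (invTrans (s (ξ ≫ η)))
      have hc' : (c' ξ η).app a =
          (c ξ η).app a ≫ (invTrans (s ξ)).app a ≫
            (eqToHom (show a = (P.inv ξ).obj ((P.map ξ).obj a) by simp) ≫
              (P.inv ξ).map ((invTrans (s η)).app ((P.map ξ).obj a)) ≫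
              eqToHom (show (P.inv ξ).obj ((P.map ξ).obj a) = a by simp)) ≫
            Groupoid.inv ((invTrans (s (ξ ≫ η))).app a) := by
        simp only [invTrans_app, ginv_ginv, mid_inv P ξ (s η) a]
        rw [hs2 ξ η a]
        exact (alg2 ((c' ξ η).app a)
          ((s ξ).app a)
          (eqToHom (show a = (P.inv ξ).obj ((P.map ξ).obj a) by simp) ≫
            (P.inv ξ).map ((s η).app ((P.map ξ).obj a)) ≫
            eqToHom (show (P.inv ξ).obj ((P.map ξ).obj a) = a by simp))
          (s (ξ ≫ η))).symm
      simp only [rhoOf_app]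
      simp only [Category.assoc] at hkey ⊢
      rw [hkey, hc']
      simp only [Category.assoc]
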